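/- Let n be a natural number with k = ⌈log₂ n⌉ ≥ 2 and 2^{k−1} < n ≤ 3·2^{k−2}. Then the minimal Colless index satisfies c(n) = c(n − 2^{k−2}) + (n − 2^{k−1}). (In particular, the leaf partition (n − 2^{k−2}, 2^{k−2}) at the root, with a fully balanced tree of height k−2 as one maximal pending subtree, is realized by a tree with minimal Colless index.) -/
import Mathlib


/-- Full binary trees: either a single leaf, or a node with two full binary subtrees. -/
inductive FBT : Type
  | leaf : FBT
  | node : FBT → FBT → FBT

namespace FBT

/-- Number of leaves of a full binary tree. -/
def leaves : FBT → ℕ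
  | leaf => 1
  | node a b => leaves a + leaves b

/-- The Colless index: the sum over internal nodes of the absolute difference of the
numbers of leaves of the two maximal pending subtrees. -/
def colless : FBT → ℕ
  | leaf => 0
  | node a b => colless a + colless b + Nat.dist (leaves a) (leaves b)

end FBT

/-- The minimal Colless index over all full binary trees with `n` leaves. -/
noncomputable def minColless (n : ℕ) : ℕ :=
  sInf {m : ℕ | ∃ T : FBT, T.leaves = n ∧ T.colless = m}

/-- The Colless index of the maximally balanced tree with `n` leaves. -/
def cmb (n : ℕ) : ℕ :=
  if n ≤ 1 then 0 else cmb (n / 2) + cmb ((n + 1) / 2) + n % 2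
termination_by n
decreasing_by all_goals omega

lemma cmb_rec (n : ℕ) (h : 2 ≤ n) :
    cmb n = cmb (n / 2) + cmb ((n + 1) / 2) + n % 2 := by
  rw [cmb]; rw [if_neg (by omega)]

lemma cmb_zero : cmb 0 = 0 := by rw [cmb]; norm_num
lemma cmb_one : cmb 1 = 0 := by rw [cmb]; norm_num

lemma cmb_even (c : ℕ) : cmb (2 * c) = cmb c + cmb c := by
  rcases Nat.eq_zero_or_pos c with rfl | hc
  · simpa using cmb_zero
  · rw [cmb_rec (2 * c) (by omega)]
    rw [show 2 * c / 2 = c from by omega, show (2 * c + 1) / 2 = c from by omega,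
      show 2 * c % 2 = 0 from by omega]
    omega

lemma cmb_odd (c : ℕ) (hc : 1 ≤ c) : cmb (2 * c + 1) = cmb (c + 1) + cmb c + 1 := by
  rw [cmb_rec (2 * c + 1) (by omega)]
  rw [show (2 * c + 1) / 2 = c from by omega, show (2 * c + 1 + 1) / 2 = c + 1 from by omega,
    show (2 * c + 1) % 2 = 1 from by omega]
  omega

lemma cmb_two : cmb 2 = 0 := by
  have := cmb_even 1; simpa [cmb_one] using this

lemma cmb_three : cmb 3 = 1 := by
  have := cmb_odd 1 le_rfl; simp [cmb_one, cmb_two] at this; omega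

/-- Key superadditivity-type inequality: the balanced value is a lower bound for
any root split `(a, b)` with `b ≤ a`. -/
lemma cmb_key : ∀ n a b : ℕ, a + b = n → 1 ≤ b → b ≤ a → cmb n + b ≤ cmb a + cmb b + a := by
  intro n
  induction n using Nat.strong_induction_on with
  | _ n ih =>
  intro a b hab hb1 hba
  subst hab
  rcases eq_or_lt_of_le hba with rfl | hlt
  · rw [show b + b = 2 * b from by ring, cmb_even]
  · by_cases hb2 : b = 1
    · subst hb2
      rcases Nat.even_or_odd a with ⟨s, rfl⟩ | ⟨s, rfl⟩
      · rw [show s + s = 2 * s from by ring] at *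
        have hs : 1 ≤ s := by omega
        rw [cmb_odd s hs, cmb_one, cmb_even]
        have h1 := ih (s + 1) (by omega) s 1 (by omega) le_rfl hs
        rw [cmb_one] at h1
        omega
      · have hs : 1 ≤ s := by omega
        rw [show 2 * s + 1 + 1 = 2 * (s + 1) from by ring, cmb_even, cmb_odd s hs, cmb_one]
        have h1 := ih (s + 1) (by omega) s 1 (by omega) le_rfl hs
        rw [cmb_one] at h1
        omega
    · rcases Nat.even_or_odd a with ⟨s, rfl⟩ | ⟨s, rfl⟩ <;>
        rcases Nat.even_or_odd b with ⟨t, rfl⟩ | ⟨t, rfl⟩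
      · rw [show s + s = 2 * s from by ring] at *
        rw [show t + t = 2 * t from by ring] at *
        have ht : 1 ≤ t := by omega
        rw [show 2 * s + 2 * t = 2 * (s + t) from by ring, cmb_even, cmb_even, cmb_even]
        have h1 := ih (s + t) (by omega) s t rfl ht (by omega)
        omega
      · rw [show s + s = 2 * s from by ring] at *
        have ht : 1 ≤ t := by omega
        rw [show 2 * s + (2 * t + 1) = 2 * (s + t) + 1 from by ring,
          cmb_odd (s + t) (by omega), cmb_even, cmb_odd t ht]
        have h1 := ih (s + t + 1) (by omega) s (t + 1) (by omega) (by omega) (by omega)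
        have h2 := ih (s + t) (by omega) s t (by omega) ht (by omega)
        omega
      · rw [show t + t = 2 * t from by ring] at *
        have ht : 1 ≤ t := by omega
        have hs : 1 ≤ s := by omega
        rw [show 2 * s + 1 + 2 * t = 2 * (s + t) + 1 from by ring,
          cmb_odd (s + t) (by omega), cmb_odd s hs, cmb_even]
        have h1 := ih (s + t + 1) (by omega) (s + 1) t (by omega) ht (by omega)
        have h2 := ih (s + t) (by omega) s t (by omega) ht (by omega)
        omega
      · have ht : 1 ≤ t := by omega
        have hs : 1 ≤ s := by omega
        rw [show 2 * s + 1 + (2 * t + 1) = 2 * (s + t + 1) from by ring,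
          cmb_even, cmb_odd s hs, cmb_odd t ht]
        have h1 := ih (s + t + 1) (by omega) (s + 1) t (by omega) ht (by omega)
        have h2 := ih (s + t + 1) (by omega) s (t + 1) (by omega) (by omega) (by omega)
        omega

/-- The recursion for `cmb` on the first interval. -/
lemma cmb_interval : ∀ j m : ℕ, 2 ^ j ≤ m → m ≤ 2 ^ (j + 1) →
    cmb (m + 2 ^ j) + 2 ^ j = cmb m + m := by
  intro j
  induction j with
  | zero =>
    intro m h1 h2
    norm_num at h1 h2 ⊢
    interval_cases m
    · simp [cmb_two, cmb_one]
    · simp [cmb_three, cmb_two]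
  | succ i ih =>
    intro m h1 h2
    have hpw : (2:ℕ) ^ (i + 1) = 2 * 2 ^ i := by rw [pow_succ]; ring
    have hpw2 : (2:ℕ) ^ (i + 1 + 1) = 4 * 2 ^ i := by rw [pow_succ, pow_succ]; ring
    have hip : 1 ≤ (2:ℕ) ^ i := Nat.one_le_two_pow
    rcases Nat.even_or_odd m with ⟨t, rfl⟩ | ⟨t, rfl⟩
    · rw [show t + t = 2 * t from by ring] at *
      have k1 := ih t (by omega) (by omega)
      rw [show 2 * t + 2 ^ (i + 1) = 2 * (t + 2 ^ i) from by rw [hpw]; ring,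
        cmb_even, cmb_even]
      omega
    · have ht : 2 ^ i ≤ t := by omega
      have k1 := ih t (by omega) (by omega)
      have k2 := ih (t + 1) (by omega) (by omega)
      rw [show t + 1 + 2 ^ i = t + 2 ^ i + 1 from by ring] at k2
      rw [show 2 * t + 1 + 2 ^ (i + 1) = 2 * (t + 2 ^ i) + 1 from by rw [hpw]; ring,
        cmb_odd (t + 2 ^ i) (by omega), cmb_odd t (by omega)]
      omega

lemma leaves_pos (T : FBT) : 1 ≤ T.leaves := by
  induction T with
  | leaf => simp [FBT.leaves]
  | node a b iha ihb => simp only [FBT.leaves]; omega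

/-- Lower bound: every full binary tree has Colless index at least `cmb` of its leaf count. -/
lemma colless_lower (T : FBT) : cmb T.leaves ≤ T.colless := by
  induction T with
  | leaf => simp [FBT.leaves, FBT.colless, cmb_one]
  | node a b iha ihb =>
    simp only [FBT.leaves, FBT.colless]
    have ha := leaves_pos a
    have hb := leaves_pos b
    have hd : Nat.dist a.leaves b.leaves
        = a.leaves - b.leaves + (b.leaves - a.leaves) := rfl
    rcases le_total b.leaves a.leaves with h | h
    · have hk := cmb_key (a.leaves + b.leaves) a.leaves b.leaves rfl hb h
      omega
    · have hk := cmb_key (a.leaves + b.leaves) b.leaves a.leaves (by omega) ha h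
      omega

/-- The maximally balanced tree realizes `cmb`. -/
lemma exists_tree : ∀ n : ℕ, 1 ≤ n → ∃ T : FBT, T.leaves = n ∧ T.colless = cmb n := by
  intro n
  induction n using Nat.strong_induction_on with
  | _ n ih =>
  intro hn
  rcases eq_or_lt_of_le hn with h1 | h2
  · exact ⟨FBT.leaf, by simp [FBT.leaves, ← h1], by simp [FBT.colless, ← h1, cmb_one]⟩
  · obtain ⟨T1, hT1l, hT1c⟩ := ih ((n + 1) / 2) (by omega) (by omega)
    obtain ⟨T2, hT2l, hT2c⟩ := ih (n / 2) (by omega) (by omega)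
    refine ⟨FBT.node T1 T2, ?_, ?_⟩
    · simp only [FBT.leaves, hT1l, hT2l]; omega
    · simp only [FBT.colless, hT1l, hT2l, hT1c, hT2c]
      have hd : Nat.dist ((n + 1) / 2) (n / 2)
          = (n + 1) / 2 - n / 2 + (n / 2 - (n + 1) / 2) := rfl
      rw [cmb_rec n (by omega)]
      omega

/-- The minimal Colless index equals the Colless index of the maximally balanced tree. -/
lemma minColless_eq (n : ℕ) (h : 1 ≤ n) : minColless n = cmb n := by
  obtain ⟨T, hT1, hT2⟩ := exists_tree n h
  apply le_antisymm
  · exact Nat.sInf_le ⟨T, hT1, hT2⟩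
  · have hne : {m : ℕ | ∃ T : FBT, T.leaves = n ∧ T.colless = m}.Nonempty :=
      ⟨T.colless, T, hT1, rfl⟩
    obtain ⟨S, hS1, hS2⟩ := Nat.sInf_mem hne
    rw [minColless, ← hS2, ← hS1]
    exact colless_lower S

theorem minColless_first_interval (n : ℕ) (k : ℕ) (hk : k = Nat.clog 2 n) (hk2 : 2 ≤ k)
    (h1 : 2 ^ (k - 1) < n) (h2 : n ≤ 3 * 2 ^ (k - 2)) :
    minColless n = minColless (n - 2 ^ (k - 2)) + (n - 2 ^ (k - 1)) := by
  have hkk : k - 1 = (k - 2) + 1 := by omega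
  have hpow : 2 ^ (k - 1) = 2 * 2 ^ (k - 2) := by rw [hkk, pow_succ]; ring
  have hip : 1 ≤ (2:ℕ) ^ (k - 2) := Nat.one_le_two_pow
  have hml : 2 ^ (k - 2) ≤ n - 2 ^ (k - 2) := by omega
  have hmu : n - 2 ^ (k - 2) ≤ 2 ^ ((k - 2) + 1) := by rw [pow_succ]; omega
  have hmain := cmb_interval (k - 2) (n - 2 ^ (k - 2)) hml hmu
  rw [show n - 2 ^ (k - 2) + 2 ^ (k - 2) = n from by omega] at hmain
  rw [minColless_eq n (by omega), minColless_eq (n - 2 ^ (k - 2)) (by omega)]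
  omega
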